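/- Gluing construction consistency: the inverse of the bijection τ ↦ (ℓ(τ), b(τ)) on discrete planar trees with k leaves can be realized iteratively: start from a single branch of length ℓ_1 (the path to leaf 1), and for i = 1, ..., k−1, graft a new branch of length ℓ_{i+1} − b_i at the right-most vertex at height b_i of the current tree, as a new last child. After step i, the resulting tree has exactly i+1 leaves with heights ℓ_1, ..., ℓ_{i+1} and consecutive-MRCA heights b_1, ..., b_i. -/

import Mathlib

open scoped Classical

noncomputable section

/-- A (finite) rooted planar tree: prefix-closed finite set of words over ℕ containing
the root, with consecutively indexed children. -/
def IsPlanarTree (τ : Finset (List ℕ)) : Prop :=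
  [] ∈ τ ∧ (∀ v w : List ℕ, v <+: w → w ∈ τ → v ∈ τ) ∧
    ∀ v : List ℕ, ∃ d : ℕ, ∀ i : ℕ, v ++ [i] ∈ τ ↔ i < d

/-- The leaves of a set of words: its maximal elements for the prefix order. -/
def leavesOf (s : Finset (List ℕ)) : Finset (List ℕ) :=
  s.filter fun v => ∀ w ∈ s, v <+: w → w = v

/-- Length of the longest common prefix of two words (generation of the MRCA). -/
def commonPrefixLen : List ℕ → List ℕ → ℕ
  | a :: v, b :: w => if a = b then commonPrefixLen v w + 1 else 0
  | _, _ => 0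

/-- The `i`-th leaf of a tree with `k` leaves, in lexicographic order. -/
def leafVec (τ : Finset (List ℕ)) {k : ℕ} (h : (leavesOf τ).card = k) (i : Fin k) :
    List ℕ :=
  ((leavesOf τ).orderIsoOfFin h i : List ℕ)

/-- The lexicographically largest (right-most) vertex of `τ` at generation `n`. -/
def rightmostAt (τ : Finset (List ℕ)) (n : ℕ) : List ℕ :=
  ((τ.filter fun w => w.length = n).max).unbotD []

/-- The out-degree of `v` in `τ`. -/
def degreeOf (τ : Finset (List ℕ)) (v : List ℕ) : ℕ :=
  (τ.filter fun w => ∃ i, w = v ++ [i]).card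

/-- The path of `m` vertices grafted at `v` as its child of label `i`. -/
def branchFrom (v : List ℕ) (i m : ℕ) : Finset (List ℕ) :=
  ((List.range m).map fun j => v ++ [i] ++ List.replicate j 0).toFinset

/-- The iterative gluing construction: start from a single branch of length `ℓ 0`, and at
step `i + 1` graft a branch of length `ℓ (i+1) − b i` at the right-most vertex at height
`b i` of the current tree, as a new last child. -/
def glueTree (ℓ b : ℕ → ℕ) : ℕ → Finset (List ℕ)
  | 0 => ((List.range (ℓ 0 + 1)).map fun j => List.replicate j 0).toFinset
  | i + 1 =>
      let τ := glueTree ℓ b i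
      let v := rightmostAt τ (b i)
      τ ∪ branchFrom v (degreeOf τ v) (ℓ (i + 1) - b i)

/-! ### Auxiliary list lemmas -/

lemma GT.lt_of_prefix_ne {u w : List ℕ} (h : u <+: w) (hne : u ≠ w) : u < w := by
  obtain ⟨t, rfl⟩ := h
  have ht : t ≠ [] := by rintro rfl; simp at hne
  clear hne
  induction u with
  | nil =>
    cases t with
    | nil => exact absurd rfl ht
    | cons a t => exact List.Lex.nil
  | cons a u ih => exact List.Lex.cons ih

lemma GT.le_of_prefix {u w : List ℕ} (h : u <+: w) : u ≤ w := by
  by_cases he : u = w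
  · exact le_of_eq he
  · exact le_of_lt (GT.lt_of_prefix_ne h he)

lemma GT.lt_of_take_eq_getD_lt : ∀ (n : ℕ) {u w : List ℕ}, u.take n = w.take n →
    n < u.length → n < w.length → u.getD n 0 < w.getD n 0 → u < w := by
  intro n
  induction n with
  | zero =>
    intro u w _ hu hw hlt
    match u, w with
    | a :: u, c :: w => simpa using List.Lex.rel (show a < c by simpa using hlt)
  | succ n ih =>
    intro u w ht hu hw hlt
    match u, w with
    | a :: u, c :: w =>
      simp only [List.take_succ_cons, List.cons.injEq] at ht
      obtain ⟨rfl, ht⟩ := ht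
      exact List.Lex.cons (ih ht (by simpa using hu) (by simpa using hw) (by simpa using hlt))

lemma GT.lex_take {u w : List ℕ} (h : List.Lex (· < ·) u w) :
    ∀ n : ℕ, u.take n ≤ w.take n := by
  induction h with
  | nil => intro n; cases n with
    | zero => simp
    | succ n => exact le_of_lt List.Lex.nil
  | @cons a u w h ih =>
    intro n
    cases n with
    | zero => simp
    | succ n => simpa using List.cons_le_cons a (ih n)
  | @rel a u b w h =>
    intro n
    cases n with
    | zero => simp
    | succ n => exact le_of_lt (List.Lex.rel h)

lemma GT.take_le_take {u w : List ℕ} (h : u ≤ w) (n : ℕ) : u.take n ≤ w.take n := by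
  rcases lt_or_eq_of_le h with h | rfl
  · exact GT.lex_take h n
  · exact le_rfl

lemma GT.getD_le_of_le {u w : List ℕ} (h : u ≤ w) {n : ℕ} (ht : u.take n = w.take n)
    (hu : n < u.length) (hw : n < w.length) : u.getD n 0 ≤ w.getD n 0 := by
  by_contra hc
  push_neg at hc
  exact absurd (GT.lt_of_take_eq_getD_lt n ht.symm hw hu hc) (not_lt.mpr h)

lemma GT.getD_eq_of_take_eq {u w : List ℕ} {n m : ℕ} (ht : u.take n = w.take n)
    (hm : m < n) : u.getD m 0 = w.getD m 0 := by
  have := congrArg (fun l => l.getD m 0) ht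
  simpa [List.getD, List.getElem?_take, hm] using this

lemma GT.getD_eq_of_prefix {u w : List ℕ} (h : u <+: w) {n : ℕ} (hn : n < u.length) :
    u.getD n 0 = w.getD n 0 := by
  rw [List.getD_eq_getElem _ _ hn, List.getD_eq_getElem _ _ (lt_of_lt_of_le hn h.length_le)]
  exact h.getElem hn

lemma GT.prefix_replicate_iff {w : List ℕ} {n : ℕ} :
    w <+: List.replicate n 0 ↔ ∃ j ≤ n, w = List.replicate j 0 := by
  constructor
  · intro h
    refine ⟨w.length, by simpa using h.length_le, ?_⟩
    exact List.eq_replicate_of_mem fun x hx => List.eq_of_mem_replicate (h.sublist.subset hx)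
  · rintro ⟨j, hj, rfl⟩
    exact ⟨List.replicate (n - j) 0, by rw [List.replicate_append_replicate]; congr 1; omega⟩

lemma GT.downclosed_card (s : Finset ℕ) (h : ∀ c, c + 1 ∈ s → c ∈ s) :
    ∀ c, c ∈ s ↔ c < s.card := by
  have mono : ∀ m a, a + m ∈ s → a ∈ s := by
    intro m
    induction m with
    | zero => intro a ha; simpa using ha
    | succ m ih =>
      intro a ha
      exact ih a (h _ (by rw [show a + m + 1 = a + (m + 1) by omega]; exact ha))
  rcases s.eq_empty_or_nonempty with rfl | hs
  · simp
  · have hmax := s.max'_mem hs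
    have hsub : s = Finset.range (s.max' hs + 1) := by
      apply Finset.Subset.antisymm
      · intro x hx; simpa using Nat.lt_succ_of_le (s.le_max' x hx)
      · intro x hx
        simp only [Finset.mem_range] at hx
        exact mono (s.max' hs - x) x
          (by rw [show x + (s.max' hs - x) = s.max' hs by omega]; exact hmax)
    have hcard : s.card = s.max' hs + 1 := by conv_lhs => rw [hsub]; rw [Finset.card_range]
    intro c
    rw [hcard]
    conv_lhs => rw [hsub]
    simp

lemma GT.commonPrefixLen_spec : ∀ (n : ℕ) (u w : List ℕ), u.take n = w.take n →
    n < u.length → n < w.length → u.getD n 0 ≠ w.getD n 0 → commonPrefixLen u w = n := by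
  intro n
  induction n with
  | zero =>
    intro u w _ hu hw hne
    match u, w with
    | a :: u, c :: w =>
      have : a ≠ c := by simpa using hne
      simp [commonPrefixLen, this]
  | succ n ih =>
    intro u w ht hu hw hne
    match u, w with
    | a :: u, c :: w =>
      simp only [List.take_succ_cons, List.cons.injEq] at ht
      obtain ⟨rfl, ht⟩ := ht
      have hh := ih u w ht (by simpa using hu) (by simpa using hw) (by simpa using hne)
      simp [commonPrefixLen, hh]

/-! ### The explicit leaf words -/

def Lf (ℓ b : ℕ → ℕ) : ℕ → List ℕ
  | 0 => List.replicate (ℓ 0) 0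
  | i + 1 => (Lf ℓ b i).take (b i) ++
      ((Lf ℓ b i).getD (b i) 0 + 1) :: List.replicate (ℓ (i + 1) - b i - 1) 0

variable {ℓ b : ℕ → ℕ}

lemma Lf_length : ∀ i, (∀ t, t < i → b t < min (ℓ t) (ℓ (t + 1))) →
    (Lf ℓ b i).length = ℓ i := by
  intro i
  induction i with
  | zero => intro _; simp [Lf]
  | succ i ih =>
    intro H
    have hlen := ih (fun t ht => H t (by omega))
    have hb := H i (by omega)
    simp only [Lf, List.length_append, List.length_take, List.length_cons,
      List.length_replicate, hlen]
    omega

lemma Lf_take_getD (i : ℕ) (hb : b i ≤ (Lf ℓ b i).length) :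
    (Lf ℓ b (i + 1)).take (b i) = (Lf ℓ b i).take (b i) ∧
    (Lf ℓ b (i + 1)).getD (b i) 0 = (Lf ℓ b i).getD (b i) 0 + 1 := by
  have hlt : ((Lf ℓ b i).take (b i)).length = b i := by simp [hb]
  constructor
  · show (((Lf ℓ b i).take (b i)) ++ _).take (b i) = _
    rw [List.take_left' hlt]
  · show (((Lf ℓ b i).take (b i)) ++ _).getD (b i) 0 = _
    rw [List.getD_append_right _ _ _ _ hlt.le, hlt]
    simp

lemma Lf_pair {i : ℕ} (H : ∀ t, t < i → b t < min (ℓ t) (ℓ (t + 1))) :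
    ∀ j j' : ℕ, j < j' → j' ≤ i → ∃ n,
      n < (Lf ℓ b j).length ∧ n < (Lf ℓ b j').length ∧
      (Lf ℓ b j).take n = (Lf ℓ b j').take n ∧
      (Lf ℓ b j).getD n 0 < (Lf ℓ b j').getD n 0 := by
  have len : ∀ t, t ≤ i → (Lf ℓ b t).length = ℓ t :=
    fun t ht => Lf_length t (fun s hs => H s (by omega))
  intro j j' hjj' hj'i
  induction j' with
  | zero => omega
  | succ j' ih =>
    have hj' : j' < i := by omega
    have hbj' : b j' < min (ℓ j') (ℓ (j' + 1)) := H j' hj'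
    have hlen' : (Lf ℓ b j').length = ℓ j' := len j' (by omega)
    have hlen'' : (Lf ℓ b (j'+1)).length = ℓ (j'+1) := len (j'+1) (by omega)
    have step := Lf_take_getD (ℓ := ℓ) (b := b) j' (by omega)
    rcases Nat.lt_or_ge j j' with hlt | hge
    · obtain ⟨n, hn1, hn2, hteq, hgd⟩ := ih hlt (by omega)
      rcases le_or_gt n (b j') with hc | hc
      · refine ⟨n, hn1, by omega, ?_, ?_⟩
        · calc (Lf ℓ b j).take n = (Lf ℓ b j').take n := hteq
            _ = ((Lf ℓ b j').take (b j')).take n := by rw [List.take_take]; congr 1; omega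
            _ = ((Lf ℓ b (j'+1)).take (b j')).take n := by rw [step.1]
            _ = (Lf ℓ b (j'+1)).take n := by rw [List.take_take]; congr 1; omega
        · rcases Nat.lt_or_ge n (b j') with hc2 | hc2
          · rw [GT.getD_eq_of_take_eq step.1 hc2]; exact hgd
          · have hn : n = b j' := by omega
            rw [hn] at hgd ⊢
            omega
      · refine ⟨b j', by omega, by omega, ?_, ?_⟩
        · calc (Lf ℓ b j).take (b j') = ((Lf ℓ b j).take n).take (b j') := by
                rw [List.take_take]; congr 1; omega
            _ = ((Lf ℓ b j').take n).take (b j') := by rw [hteq]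
            _ = (Lf ℓ b j').take (b j') := by rw [List.take_take]; congr 1; omega
            _ = (Lf ℓ b (j'+1)).take (b j') := step.1.symm
        · have h1 : (Lf ℓ b j).getD (b j') 0 = (Lf ℓ b j').getD (b j') 0 :=
            GT.getD_eq_of_take_eq hteq hc
          rw [h1, step.2]; omega
    · have : j = j' := by omega
      subst this
      exact ⟨b j, by omega, by omega, step.1.symm, by rw [step.2]; omega⟩

lemma Lf_lt {i : ℕ} (H : ∀ t, t < i → b t < min (ℓ t) (ℓ (t + 1)))
    {j j' : ℕ} (hjj' : j < j') (hj'i : j' ≤ i) : Lf ℓ b j < Lf ℓ b j' := by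
  obtain ⟨n, h1, h2, h3, h4⟩ := Lf_pair H j j' hjj' hj'i
  exact GT.lt_of_take_eq_getD_lt n h3 h1 h2 h4

lemma Lf_not_prefix {i : ℕ} (H : ∀ t, t < i → b t < min (ℓ t) (ℓ (t + 1)))
    {j j' : ℕ} (hne : j ≠ j') (hj : j ≤ i) (hj' : j' ≤ i) :
    ¬ Lf ℓ b j <+: Lf ℓ b j' := by
  intro hpre
  rcases Nat.lt_or_ge j j' with h | h
  · obtain ⟨n, h1, h2, h3, h4⟩ := Lf_pair H j j' h hj'
    exact absurd (GT.getD_eq_of_prefix hpre h1) (by omega)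
  · have hlt : Lf ℓ b j' < Lf ℓ b j := Lf_lt H (by omega) hj
    exact absurd (GT.le_of_prefix hpre) (not_le.mpr hlt)

/-! ### Membership and downward-closedness invariants -/

def GMem (ℓ b : ℕ → ℕ) (i : ℕ) : Prop :=
  ∀ w, w ∈ glueTree ℓ b i ↔ ∃ j ≤ i, w <+: Lf ℓ b j

def GDown (τ : Finset (List ℕ)) : Prop :=
  ∀ w c, w ++ [c + 1] ∈ τ → w ++ [c] ∈ τ

lemma getD_append_singleton (v : List ℕ) (c : ℕ) : (v ++ [c]).getD v.length 0 = c := by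
  rw [List.getD_append_right _ _ _ _ le_rfl]
  simp

lemma degree_mem {τ : Finset (List ℕ)} (hdown : GDown τ) (v : List ℕ) (c : ℕ) :
    v ++ [c] ∈ τ ↔ c < degreeOf τ v := by
  classical
  set S : Finset ℕ :=
    (τ.filter fun w => ∃ c, w = v ++ [c]).image (fun w => w.getD v.length 0) with hSdef
  have hS : ∀ c, c ∈ S ↔ v ++ [c] ∈ τ := by
    intro c
    constructor
    · intro hc
      simp only [hSdef, Finset.mem_image, Finset.mem_filter] at hc
      obtain ⟨w, ⟨hwτ, c', rfl⟩, hgd⟩ := hc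
      rw [getD_append_singleton v c'] at hgd
      rwa [← hgd]
    · intro hc
      simp only [hSdef, Finset.mem_image, Finset.mem_filter]
      exact ⟨v ++ [c], ⟨hc, c, rfl⟩, getD_append_singleton v c⟩
  have hcard : S.card = degreeOf τ v := by
    rw [hSdef, degreeOf]
    apply Finset.card_image_of_injOn
    intro w1 hw1 w2 hw2 heq
    simp only [Finset.mem_coe, Finset.mem_filter] at hw1 hw2
    obtain ⟨-, c1, rfl⟩ := hw1
    obtain ⟨-, c2, rfl⟩ := hw2
    simp only [getD_append_singleton] at heq
    rw [heq]
  have := GT.downclosed_card S (fun c hc => (hS c).mpr (hdown v c ((hS _).mp hc)))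
  rw [← hS, this, hcard]

lemma glue_main : ∀ i : ℕ, (∀ t, t < i → b t < min (ℓ t) (ℓ (t + 1))) →
    GMem ℓ b i ∧ GDown (glueTree ℓ b i) := by
  intro i
  induction i with
  | zero =>
    intro _
    have h0 : Lf ℓ b 0 = List.replicate (ℓ 0) 0 := rfl
    have hmem : GMem ℓ b 0 := by
      intro w
      show w ∈ ((List.range (ℓ 0 + 1)).map fun j => List.replicate j 0).toFinset ↔ _
      simp only [List.mem_toFinset, List.mem_map, List.mem_range]
      constructor
      · rintro ⟨j, hj, rfl⟩
        exact ⟨0, le_rfl, h0 ▸ GT.prefix_replicate_iff.mpr ⟨j, by omega, rfl⟩⟩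
      · rintro ⟨j, hj, hpre⟩
        have hj0 : j = 0 := by omega
        subst hj0
        rw [h0] at hpre
        obtain ⟨j', hj', rfl⟩ := GT.prefix_replicate_iff.mp hpre
        exact ⟨j', by omega, rfl⟩
    refine ⟨hmem, ?_⟩
    intro w c hwc
    exfalso
    obtain ⟨j, hj, hpre⟩ := (hmem _).mp hwc
    have hj0 : j = 0 := by omega
    subst hj0
    rw [h0] at hpre
    have hc : c + 1 ∈ List.replicate (ℓ 0) 0 :=
      hpre.sublist.subset (by simp)
    have := List.eq_of_mem_replicate hc
    omega
  | succ i ih =>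
    intro H
    obtain ⟨hmem, hdown⟩ := ih (fun t ht => H t (by omega))
    have hb_i := H i (by omega)
    have len_i : (Lf ℓ b i).length = ℓ i := Lf_length i (fun t ht => H t (by omega))
    have len_succ : (Lf ℓ b (i + 1)).length = ℓ (i + 1) := Lf_length (i + 1) H
    have hbl : b i < (Lf ℓ b i).length := by omega
    set τ := glueTree ℓ b i with hτ
    set V := (Lf ℓ b i).take (b i) with hV
    set e := (Lf ℓ b i).getD (b i) 0 with he
    have hVlen : V.length = b i := by rw [hV]; simp; omega
    have hVpre : V <+: Lf ℓ b i := List.take_prefix _ _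
    have hVe_eq : V ++ [e] = (Lf ℓ b i).take (b i + 1) := by
      rw [List.take_succ, hV, he]
      congr 1
      rw [List.getD_eq_getElem _ _ hbl, List.getElem?_eq_getElem hbl]
      rfl
    have hVe : V ++ [e] <+: Lf ℓ b i := hVe_eq ▸ List.take_prefix _ _
    have hVmem : V ∈ τ := (hmem V).mpr ⟨i, le_rfl, hVpre⟩
    -- (1) rightmost vertex
    have hright : rightmostAt τ (b i) = V := by
      have hVf : V ∈ τ.filter (fun w => w.length = b i) :=
        Finset.mem_filter.mpr ⟨hVmem, hVlen⟩
      have hmax : (τ.filter fun w => w.length = b i).max = (V : WithBot (List ℕ)) := by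
        apply le_antisymm
        · apply Finset.max_le
          intro w hw
          simp only [Finset.mem_filter] at hw
          obtain ⟨hwτ, hwlen⟩ := hw
          obtain ⟨j, hj, hpre⟩ := (hmem w).mp hwτ
          have hw_eq : w = (Lf ℓ b j).take (b i) := by
            have := List.prefix_iff_eq_take.mp hpre
            rwa [hwlen] at this
          have hle : Lf ℓ b j ≤ Lf ℓ b i := by
            rcases eq_or_lt_of_le hj with rfl | hlt
            · exact le_rfl
            · exact le_of_lt (Lf_lt (fun t ht => H t (by omega)) hlt le_rfl)
          have : w ≤ V := by
            rw [hw_eq, hV]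
            exact GT.take_le_take hle (b i)
          exact_mod_cast this
        · exact Finset.le_max hVf
      rw [rightmostAt, hmax, WithBot.unbotD_coe]
    -- (2) children of V
    have hchild : ∀ c, V ++ [c] ∈ τ ↔ c ≤ e := by
      intro c
      constructor
      · intro hc
        obtain ⟨j, hj, hpre⟩ := (hmem _).mp hc
        have hlenle : b i + 1 ≤ (Lf ℓ b j).length := by
          have := hpre.length_le
          simpa [hVlen] using this
        have htk : (Lf ℓ b j).take (b i) = V := by
          have h1 := List.prefix_iff_eq_take.mp hpre
          have h2 : (V ++ [c]).length = b i + 1 := by simp [hVlen]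
          rw [h2] at h1
          have := congrArg (fun l => l.take (b i)) h1
          simpa [List.take_take, List.take_left' hVlen] using this.symm
        have hgd : (Lf ℓ b j).getD (b i) 0 = c := by
          have h1 := GT.getD_eq_of_prefix hpre (n := b i) (by simp [hVlen])
          rw [← hVlen] at h1 ⊢
          rw [← h1, getD_append_singleton]
        rcases eq_or_lt_of_le hj with rfl | hlt
        · omega
        · have hle : Lf ℓ b j ≤ Lf ℓ b i :=
            le_of_lt (Lf_lt (fun t ht => H t (by omega)) hlt le_rfl)
          have := GT.getD_le_of_le hle (n := b i) (by rw [htk, hV]) (by omega) hbl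
          omega
      · intro hc
        have key : ∀ t, t ≤ e → V ++ [e - t] ∈ τ := by
          intro t
          induction t with
          | zero =>
            intro _
            simpa using (hmem _).mpr ⟨i, le_rfl, hVe⟩
          | succ t iht =>
            intro h
            have h2 := iht (by omega)
            have h3 : e - t = (e - (t + 1)) + 1 := by omega
            rw [h3] at h2
            exact hdown _ _ h2
        have := key (e - c) (by omega)
        rwa [show e - (e - c) = c by omega] at this
    -- (3) degree of V
    have hdeg : degreeOf τ V = e + 1 := by
      have h1 : ∀ c, V ++ [c] ∈ τ ↔ c < degreeOf τ V := degree_mem hdown V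
      have h2 : e < degreeOf τ V := (h1 e).mp ((hchild e).mpr le_rfl)
      have h3 : ¬ (e + 1 < degreeOf τ V) := fun hx => by
        have := (hchild _).mp ((h1 _).mpr hx); omega
      omega
    -- (4) unfolding the construction
    set m := ℓ (i + 1) - b i with hm
    have hm1 : 1 ≤ m := by omega
    have hglue : glueTree ℓ b (i + 1) = τ ∪ branchFrom V (e + 1) m := by
      show (glueTree ℓ b i ∪ branchFrom (rightmostAt (glueTree ℓ b i) (b i))
        (degreeOf (glueTree ℓ b i) (rightmostAt (glueTree ℓ b i) (b i)))
        (ℓ (i + 1) - b i)) = _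
      rw [← hτ, hright, hdeg, ← hm]
    have hLsucc : Lf ℓ b (i + 1) = (V ++ [e + 1]) ++ List.replicate (m - 1) 0 := by
      show (Lf ℓ b i).take (b i) ++ ((Lf ℓ b i).getD (b i) 0 + 1)
          :: List.replicate (ℓ (i + 1) - b i - 1) 0 = _
      rw [show ℓ (i + 1) - b i - 1 = m - 1 by omega]
      simp [he, List.getD]; rfl
    have hbranch : ∀ w, w ∈ branchFrom V (e + 1) m ↔
        ∃ jj < m, w = (V ++ [e + 1]) ++ List.replicate jj 0 := by
      intro w
      simp only [branchFrom, List.mem_toFinset, List.mem_map, List.mem_range]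
      constructor
      · rintro ⟨jj, hjj, rfl⟩; exact ⟨jj, hjj, by simp⟩
      · rintro ⟨jj, hjj, rfl⟩; exact ⟨jj, hjj, by simp⟩
    -- (5) membership in the new tree
    have hmem' : GMem ℓ b (i + 1) := by
      intro w
      rw [hglue, Finset.mem_union]
      constructor
      · rintro (hw | hw)
        · obtain ⟨j, hj, hp⟩ := (hmem w).mp hw
          exact ⟨j, by omega, hp⟩
        · obtain ⟨jj, hjj, rfl⟩ := (hbranch w).mp hw
          refine ⟨i + 1, le_rfl, ?_⟩
          rw [hLsucc]
          apply List.prefix_append_right_inj _ |>.mpr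
          exact GT.prefix_replicate_iff.mpr ⟨jj, by omega, rfl⟩
      · rintro ⟨j, hj, hp⟩
        rcases Nat.lt_or_ge j (i + 1) with hlt | hge
        · exact Or.inl ((hmem w).mpr ⟨j, by omega, hp⟩)
        · have hji : j = i + 1 := by omega
          subst hji
          rcases le_or_gt w.length (b i) with hwl | hwl
          · refine Or.inl ((hmem w).mpr ⟨i, le_rfl, ?_⟩)
            have h1 : w <+: V := by
              have hweq := List.prefix_iff_eq_take.mp hp
              rw [hweq, hLsucc, List.append_assoc, List.take_append]
              rw [show w.length - V.length = 0 by omega]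
              simpa using List.take_prefix w.length V
            exact h1.trans hVpre
          · right
            rw [hbranch]
            have hwlen_le : w.length ≤ ℓ (i + 1) := by
              have := hp.length_le; omega
            refine ⟨w.length - b i - 1, by omega, ?_⟩
            have hweq := List.prefix_iff_eq_take.mp hp
            have hA : (V ++ [e + 1]).length = b i + 1 := by simp [hVlen]
            have hmin : (w.length - (b i + 1)) ⊓ (m - 1) = w.length - b i - 1 := by omega
            conv_lhs => rw [hweq, hLsucc]
            rw [List.take_append,
              List.take_of_length_le (by rw [hA]; omega), List.take_replicate, hA, hmin]
    -- (6) downward closedness of the new tree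
    have hdown' : GDown (glueTree ℓ b (i + 1)) := by
      intro w c hwc
      rw [hglue, Finset.mem_union] at hwc ⊢
      rcases hwc with hw | hw
      · exact Or.inl (hdown w c hw)
      · obtain ⟨jj, hjj, heq⟩ := (hbranch _).mp hw
        cases jj with
        | zero =>
          simp only [List.replicate_zero, List.append_nil] at heq
          obtain ⟨rfl, heq2⟩ := List.append_inj' heq rfl
          have hce : c = e := by simpa using heq2
          subst hce
          exact Or.inl ((hmem _).mpr ⟨i, le_rfl, hVe⟩)
        | succ jj =>
          exfalso
          rw [List.replicate_succ', ← List.append_assoc] at heq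
          obtain ⟨-, heq2⟩ := List.append_inj' heq rfl
          simp at heq2
    exact ⟨hmem', hdown'⟩

lemma glue_leaves {i : ℕ} (H : ∀ t, t < i → b t < min (ℓ t) (ℓ (t + 1))) :
    leavesOf (glueTree ℓ b i) = (Finset.range (i + 1)).image (Lf ℓ b) := by
  classical
  obtain ⟨hmem, -⟩ := glue_main (ℓ := ℓ) (b := b) i H
  ext w
  simp only [leavesOf, Finset.mem_filter, Finset.mem_image, Finset.mem_range]
  constructor
  · rintro ⟨hwτ, hmax⟩
    obtain ⟨j, hj, hpre⟩ := (hmem w).mp hwτ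
    have hLτ : Lf ℓ b j ∈ glueTree ℓ b i := (hmem _).mpr ⟨j, hj, List.prefix_refl _⟩
    exact ⟨j, by omega, hmax _ hLτ hpre⟩
  · rintro ⟨j, hj, rfl⟩
    refine ⟨(hmem _).mpr ⟨j, by omega, List.prefix_refl _⟩, ?_⟩
    intro u huτ hpre
    obtain ⟨j', hj', hpre'⟩ := (hmem u).mp huτ
    have hjj' : j = j' := by
      by_contra hne
      exact Lf_not_prefix H hne (by omega) hj' (hpre.trans hpre')
    subst hjj'
    have h1 : u.length ≤ (Lf ℓ b j).length := hpre'.length_le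
    have h2 : (Lf ℓ b j).length ≤ u.length := hpre.length_le
    exact (hpre'.eq_of_length (by omega)).symm ▸ (hpre.eq_of_length (by omega)).symm

lemma glue_leaves_card {i : ℕ} (H : ∀ t, t < i → b t < min (ℓ t) (ℓ (t + 1))) :
    (leavesOf (glueTree ℓ b i)).card = i + 1 := by
  rw [glue_leaves H]
  rw [Finset.card_image_of_injOn, Finset.card_range]
  intro j hj j' hj' heq
  simp only [Finset.coe_range, Set.mem_Iio] at hj hj'
  by_contra hne
  exact Lf_not_prefix H hne (by omega) (by omega) (heq ▸ List.prefix_refl _)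

lemma glue_leafVec {i : ℕ} (H : ∀ t, t < i → b t < min (ℓ t) (ℓ (t + 1)))
    (h : (leavesOf (glueTree ℓ b i)).card = i + 1) (j : Fin (i + 1)) :
    leafVec (glueTree ℓ b i) h j = Lf ℓ b j.1 := by
  classical
  have hsm : StrictMono (fun j : Fin (i + 1) => Lf ℓ b j.1) := by
    intro x y hxy
    exact Lf_lt H hxy (by omega)
  set f : Fin (i + 1) ↪o List ℕ := OrderEmbedding.ofStrictMono _ hsm with hf
  have hmemf : ∀ x : Fin (i + 1), f x ∈ leavesOf (glueTree ℓ b i) := by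
    intro x
    rw [glue_leaves H]
    exact Finset.mem_image.mpr ⟨x.1, Finset.mem_range.mpr x.2, rfl⟩
  have huniq := Finset.orderEmbOfFin_unique' h hmemf
  rw [leafVec, Finset.coe_orderIsoOfFin_apply, ← huniq]
  rfl

/-- **Consistency of the gluing construction** (surjectivity of the point-process
encoding). Given data `(ℓ, b) ∈ ℕ^k × ℕ^{k-1}` with `b i < min (ℓ i, ℓ (i+1))`, after
step `i` of the iterative construction the resulting object is a planar tree with
exactly `i + 1` leaves, whose leaf heights are `ℓ 0, …, ℓ i` and whose consecutive-MRCA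
heights are `b 0, …, b (i-1)`. -/
theorem glueTree_spec (k : ℕ) (hk : 1 ≤ k) (ℓ b : ℕ → ℕ)
    (hb : ∀ i, i + 1 < k → b i < min (ℓ i) (ℓ (i + 1))) :
    ∀ i, i < k →
      IsPlanarTree (glueTree ℓ b i) ∧
      ∃ h : (leavesOf (glueTree ℓ b i)).card = i + 1,
        (∀ j : Fin (i + 1), (leafVec (glueTree ℓ b i) h j).length = ℓ j.1) ∧
        ∀ j : Fin i,
          commonPrefixLen
              (leafVec (glueTree ℓ b i) h ⟨j.1, by have := j.2; omega⟩)
              (leafVec (glueTree ℓ b i) h ⟨j.1 + 1, by have := j.2; omega⟩)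
            = b j.1 := by
  intro i hik
  have H : ∀ t, t < i → b t < min (ℓ t) (ℓ (t + 1)) := fun t ht => hb t (by omega)
  obtain ⟨hmem, hdown⟩ := glue_main (ℓ := ℓ) (b := b) i H
  refine ⟨⟨(hmem _).mpr ⟨0, by omega, List.nil_prefix⟩, ?_, ?_⟩, ?_⟩
  · intro v w hvw hw
    obtain ⟨j, hj, hp⟩ := (hmem w).mp hw
    exact (hmem v).mpr ⟨j, hj, hvw.trans hp⟩
  · intro v
    exact ⟨degreeOf (glueTree ℓ b i) v, fun c => degree_mem hdown v c⟩
  · refine ⟨glue_leaves_card H, ?_, ?_⟩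
    · intro j
      rw [glue_leafVec H]
      exact Lf_length j.1 (fun t ht => H t (by omega))
    · intro j
      rw [glue_leafVec H, glue_leafVec H]
      show commonPrefixLen (Lf ℓ b j.1) (Lf ℓ b (j.1 + 1)) = b j.1
      have hbj : b j.1 < min (ℓ j.1) (ℓ (j.1 + 1)) := H j.1 j.2
      have hlen : (Lf ℓ b j.1).length = ℓ j.1 := Lf_length j.1 (fun t ht => H t (by omega))
      have hlen' : (Lf ℓ b (j.1 + 1)).length = ℓ (j.1 + 1) :=
        Lf_length (j.1 + 1) (fun t ht => H t (by omega))
      have step := Lf_take_getD (ℓ := ℓ) (b := b) j.1 (by omega)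
      exact GT.commonPrefixLen_spec (b j.1) _ _ step.1.symm (by omega) (by omega) (by omega)


end
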